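/- Fix d > 1 and 0 < λ < ∞, and let f_λ denote the unique fixed point of the truncated cavity operator T, extended to ℝ by 1 on (-∞,-λ] and 0 on (λ,∞). Then for all x ∈ [0, λ], f_λ(-x) ≥ exp(-exp(-f_λ(0) x^d)). -/

import Mathlib

open MeasureTheory Set

/-- The truncated cavity operator `T`. -/
noncomputable def T (d lam : ℝ) (f : ℝ → ℝ) : ℝ → ℝ :=
  fun x => Real.exp (-(d * ∫ y in (-x)..lam, (x + y) ^ (d - 1) * f y))

/-- `f` is the fixed point of the truncated cavity operator on `[-λ, λ]`
(non-increasing and `[0,1]`-valued there), extended to `ℝ` by `1` on `(-∞, -λ]`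
and `0` on `(λ, ∞)`. -/
def ExtFixedPoint (d lam : ℝ) (f : ℝ → ℝ) : Prop :=
  AntitoneOn f (Icc (-lam) lam) ∧
  (∀ x ∈ Icc (-lam) lam, f x ∈ Icc (0 : ℝ) 1) ∧
  (∀ x ≤ -lam, f x = 1) ∧ (∀ x > lam, f x = 0) ∧
  (∀ x ∈ Icc (-lam) lam, T d lam f x = f x)

lemma aux_int (d : ℝ) (hd : 1 < d) (h : ℝ → ℝ) (hm : Measurable h)
    (x a b M : ℝ) (hab : a ≤ b) (hax : -x ≤ a)
    (hM : ∀ t ∈ Set.Ioc a b, |h t| ≤ M) :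
    IntervalIntegrable (fun y => (x + y) ^ (d - 1) * h y) volume a b := by
  rw [intervalIntegrable_iff, Set.uIoc_of_le hab]
  have hc : Continuous fun y : ℝ => (x + y) ^ (d - 1) :=
    (Real.continuous_rpow_const (by linarith)).comp (continuous_const.add continuous_id)
  have hmeas : Measurable (fun y : ℝ => (x + y) ^ (d - 1) * h y) :=
    hc.measurable.mul hm
  refine Integrable.mono' (g := fun _ => (x + b) ^ (d - 1) * M)
    (integrableOn_const measure_Ioc_lt_top.ne enorm_ne_top) hmeas.aestronglyMeasurable ?_
  refine (ae_restrict_iff' measurableSet_Ioc).2 (Filter.Eventually.of_forall fun y hy => ?_)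
  have h0 : 0 ≤ x + y := by linarith [hy.1]
  have h1 : x + y ≤ x + b := by linarith [hy.2]
  have h2 : (0:ℝ) ≤ d - 1 := by linarith
  rw [Real.norm_eq_abs, abs_mul, abs_of_nonneg (Real.rpow_nonneg h0 _)]
  exact mul_le_mul (Real.rpow_le_rpow h0 h1 h2) (hM y hy) (abs_nonneg _)
    (Real.rpow_nonneg (by linarith) _)

/-- for `x ∈ [0, λ]`, `f_λ(-x) ≥ exp(-exp(-f_λ(0) x^d))`. -/
theorem fixedPoint_lower_bound (d lam : ℝ) (hd : 1 < d) (hlam : 0 < lam)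
    (flam : ℝ → ℝ) (hflam : ExtFixedPoint d lam flam) :
    ∀ x ∈ Icc (0 : ℝ) lam, Real.exp (-Real.exp (-(flam 0 * x ^ d))) ≤ flam (-x) := by
  obtain ⟨h1, h2, h3, h4, h5⟩ := hflam
  have hd0 : (0:ℝ) < d := by linarith
  have hd1 : (0:ℝ) ≤ d - 1 := by linarith
  have hge0 : ∀ u, 0 ≤ flam u := by
    intro u
    rcases le_or_gt u (-lam) with hu | hu
    · rw [h3 u hu]; norm_num
    · rcases le_or_gt u lam with hu2 | hu2
      · exact (h2 u ⟨hu.le, hu2⟩).1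
      · rw [h4 u hu2]
  have hle1 : ∀ u, flam u ≤ 1 := by
    intro u
    rcases le_or_gt u (-lam) with hu | hu
    · rw [h3 u hu]
    · rcases le_or_gt u lam with hu2 | hu2
      · exact (h2 u ⟨hu.le, hu2⟩).2
      · rw [h4 u hu2]; norm_num
  have hmono : Antitone flam := by
    intro s t hst
    rcases le_or_gt s (-lam) with hs | hs
    · rw [h3 s hs]; exact hle1 t
    · rcases le_or_gt t lam with ht | ht
      · exact h1 ⟨hs.le, hst.trans ht⟩ ⟨(hs.trans_le hst).le, ht⟩ hst
      · rw [h4 t ht]; exact hge0 s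
  have hmeas : Measurable flam := hmono.measurable
  have h0mem : (0:ℝ) ∈ Icc (-lam) lam := ⟨by linarith, hlam.le⟩
  have hbd1 : ∀ t ∈ Set.Ioc (0:ℝ) lam, |flam t| ≤ 1 := fun t _ => by
    rw [abs_of_nonneg (hge0 t)]; exact hle1 t
  -- the fixed point value at 0
  have ha_eq : flam 0 = Real.exp (-(d * ∫ t in (0:ℝ)..lam, t ^ (d - 1) * flam t)) := by
    rw [← h5 0 h0mem]
    simp only [T, neg_zero, zero_add]
  have ha_pos : 0 < flam 0 := by rw [ha_eq]; exact Real.exp_pos _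
  have ha_le1 : flam 0 ≤ 1 := hle1 0
  -- Step C : flam y ≤ flam 0 * exp(-(flam 0 * y ^ d)) for y ∈ [0, lam]
  have keyC : ∀ y ∈ Icc (0:ℝ) lam, flam y ≤ flam 0 * Real.exp (-(flam 0 * y ^ d)) := by
    intro y hy
    obtain ⟨hy0, hyl⟩ := hy
    have hymem : y ∈ Icc (-lam) lam := ⟨by linarith, hyl⟩
    have hfy : flam y = Real.exp (-(d * ∫ t in (-y)..lam, (y + t) ^ (d - 1) * flam t)) := by
      rw [← h5 y hymem]; simp only [T]
    set B0 : ℝ := ∫ t in (0:ℝ)..lam, t ^ (d - 1) * flam t with hB0def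
    set A : ℝ := ∫ t in (-y)..0, (y + t) ^ (d - 1) * flam t with hAdef
    set B : ℝ := ∫ t in (0:ℝ)..lam, (y + t) ^ (d - 1) * flam t with hBdef
    have hbd2 : ∀ t ∈ Set.Ioc (-y) (0:ℝ), |flam t| ≤ 1 := fun t _ => by
      rw [abs_of_nonneg (hge0 t)]; exact hle1 t
    have hint1 : IntervalIntegrable (fun t => (y + t) ^ (d - 1) * flam t) volume (-y) 0 :=
      aux_int d hd flam hmeas y (-y) 0 1 (by linarith) le_rfl hbd2
    have hint2 : IntervalIntegrable (fun t => (y + t) ^ (d - 1) * flam t) volume 0 lam :=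
      aux_int d hd flam hmeas y 0 lam 1 hlam.le (by linarith) hbd1
    have hsplit : A + B = ∫ t in (-y)..lam, (y + t) ^ (d - 1) * flam t :=
      intervalIntegral.integral_add_adjacent_intervals hint1 hint2
    -- lower bound for A
    have hconst_int : IntervalIntegrable (fun t => (y + t) ^ (d - 1) * flam 0) volume (-y) 0 :=
      aux_int d hd (fun _ => flam 0) measurable_const y (-y) 0 1 (by linarith) le_rfl
        (fun t _ => by rw [abs_of_nonneg ha_pos.le]; exact ha_le1)
    have hA1 : (∫ t in (-y)..0, (y + t) ^ (d - 1) * flam 0) ≤ A := by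
      refine intervalIntegral.integral_mono_on (by linarith) hconst_int hint1 fun t ht => ?_
      have htm : t ∈ Icc (-lam) lam := ⟨by linarith [ht.1], by linarith [ht.2]⟩
      exact mul_le_mul_of_nonneg_left (h1 htm h0mem ht.2)
        (Real.rpow_nonneg (by linarith [ht.1]) _)
    have hA2 : (∫ t in (-y)..0, (y + t) ^ (d - 1) * flam 0)
        = (y ^ d / d) * flam 0 := by
      rw [intervalIntegral.integral_mul_const]
      congr 1
      have hcomp : (∫ t in (-y)..0, (y + t) ^ (d - 1))
          = ∫ t in (-y)..0, (t + y) ^ (d - 1) := by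
        congr 1; ext t; rw [add_comm]
      rw [hcomp, intervalIntegral.integral_comp_add_right (fun u => u ^ (d - 1)) y]
      rw [neg_add_cancel, zero_add, integral_rpow (Or.inl (by linarith))]
      rw [Real.zero_rpow (by positivity : d - 1 + 1 ≠ 0)]
      rw [sub_add_cancel]
      ring
    have hA : (y ^ d / d) * flam 0 ≤ A := hA2 ▸ hA1
    -- lower bound for B
    have hint0 : IntervalIntegrable (fun t => t ^ (d - 1) * flam t) volume 0 lam := by
      have := aux_int d hd flam hmeas 0 0 lam 1 hlam.le (by linarith) hbd1
      simpa using this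
    have hB : B0 ≤ B := by
      refine intervalIntegral.integral_mono_on hlam.le hint0 hint2 fun t ht => ?_
      exact mul_le_mul_of_nonneg_right
        (Real.rpow_le_rpow ht.1 (by linarith [ht.1, hy0]) hd1) (hge0 t)
    -- combine
    have hexp : d * B0 + flam 0 * y ^ d ≤ d * ∫ t in (-y)..lam, (y + t) ^ (d - 1) * flam t := by
      rw [← hsplit]
      have h6 := mul_le_mul_of_nonneg_left hA hd0.le
      have h7 := mul_le_mul_of_nonneg_left hB hd0.le
      have h8 : d * ((y ^ d / d) * flam 0) = flam 0 * y ^ d := by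
        field_simp
      nlinarith [h6, h7, h8]
    rw [hfy]
    calc Real.exp (-(d * ∫ t in (-y)..lam, (y + t) ^ (d - 1) * flam t))
        ≤ Real.exp (-(d * B0 + flam 0 * y ^ d)) := Real.exp_le_exp.2 (by linarith)
      _ = Real.exp (-(d * B0)) * Real.exp (-(flam 0 * y ^ d)) := by
          rw [← Real.exp_add]; ring_nf
      _ = flam 0 * Real.exp (-(flam 0 * y ^ d)) := by rw [← ha_eq]
  -- Step D
  intro x hx
  obtain ⟨hx0, hxl⟩ := hx
  have hxmem : -x ∈ Icc (-lam) lam := ⟨by linarith, by linarith⟩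
  have hfx : flam (-x) = Real.exp (-(d * ∫ y in x..lam, (-x + y) ^ (d - 1) * flam y)) := by
    rw [← h5 (-x) hxmem]; simp only [T, neg_neg]
  rw [hfx, Real.exp_le_exp]
  have hbd3 : ∀ t ∈ Set.Ioc x lam, |flam t| ≤ 1 := fun t _ => by
    rw [abs_of_nonneg (hge0 t)]; exact hle1 t
  have hint_l : IntervalIntegrable (fun y => (-x + y) ^ (d - 1) * flam y) volume x lam :=
    aux_int d hd flam hmeas (-x) x lam 1 hxl (by linarith) hbd3
  have hcy : Continuous fun y : ℝ => y ^ d := Real.continuous_rpow_const (by linarith)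
  have hmeas_r : Measurable (fun y : ℝ => flam 0 * Real.exp (-(flam 0 * y ^ d))) :=
    (continuous_const.mul (Real.continuous_exp.comp ((continuous_const.mul hcy).neg))).measurable
  have hbd_r : ∀ t ∈ Set.Ioc x lam, |flam 0 * Real.exp (-(flam 0 * t ^ d))| ≤ 1 := by
    intro t ht
    have ht0 : (0:ℝ) ≤ t := le_trans hx0 ht.1.le
    have hexp1 : Real.exp (-(flam 0 * t ^ d)) ≤ 1 := by
      rw [Real.exp_le_one_iff]
      have : (0:ℝ) ≤ flam 0 * t ^ d :=
        mul_nonneg ha_pos.le (Real.rpow_nonneg ht0 _)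
      linarith
    rw [abs_of_nonneg (mul_nonneg ha_pos.le (Real.exp_pos _).le)]
    calc flam 0 * Real.exp (-(flam 0 * t ^ d)) ≤ 1 * 1 :=
          mul_le_mul ha_le1 hexp1 (Real.exp_pos _).le (by norm_num)
      _ = 1 := by norm_num
  have hint_r : IntervalIntegrable
      (fun y => y ^ (d - 1) * (flam 0 * Real.exp (-(flam 0 * y ^ d)))) volume x lam := by
    have := aux_int d hd (fun y => flam 0 * Real.exp (-(flam 0 * y ^ d))) hmeas_r
      0 x lam 1 hxl (by linarith) hbd_r
    simpa using this
  have hmono2 : (∫ y in x..lam, (-x + y) ^ (d - 1) * flam y)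
      ≤ ∫ y in x..lam, y ^ (d - 1) * (flam 0 * Real.exp (-(flam 0 * y ^ d))) := by
    refine intervalIntegral.integral_mono_on hxl hint_l hint_r fun y hy => ?_
    have h0xy : (0:ℝ) ≤ -x + y := by linarith [hy.1]
    have hy0 : (0:ℝ) ≤ y := le_trans hx0 hy.1
    exact mul_le_mul (Real.rpow_le_rpow h0xy (by linarith) hd1)
      (keyC y ⟨hy0, hy.2⟩) (hge0 y) (Real.rpow_nonneg hy0 _)
  -- FTC computation
  have hderiv : ∀ y ∈ Set.uIcc x lam,
      HasDerivAt (fun t : ℝ => -Real.exp (-(flam 0 * t ^ d)))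
        (d * (y ^ (d - 1) * (flam 0 * Real.exp (-(flam 0 * y ^ d))))) y := by
    intro y _
    have hr : HasDerivAt (fun t : ℝ => t ^ d) (d * y ^ (d - 1)) y :=
      Real.hasDerivAt_rpow_const (Or.inr hd.le)
    have hr2 := ((hr.const_mul (flam 0)).neg).exp.neg
    refine (hr2 : HasDerivAt (fun t : ℝ => -Real.exp (-(flam 0 * t ^ d)))
      (-(Real.exp (-(flam 0 * y ^ d)) * -(flam 0 * (d * y ^ (d - 1))))) y).congr_deriv ?_
    simp only [Pi.neg_apply]
    ring
  have hintF' : IntervalIntegrable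
      (fun y => d * (y ^ (d - 1) * (flam 0 * Real.exp (-(flam 0 * y ^ d))))) volume x lam :=
    hint_r.const_mul d
  have hcalc := intervalIntegral.integral_eq_sub_of_hasDerivAt hderiv hintF'
  have hmain : d * (∫ y in x..lam, (-x + y) ^ (d - 1) * flam y)
      ≤ Real.exp (-(flam 0 * x ^ d)) := by
    calc d * (∫ y in x..lam, (-x + y) ^ (d - 1) * flam y)
        ≤ d * ∫ y in x..lam, y ^ (d - 1) * (flam 0 * Real.exp (-(flam 0 * y ^ d))) :=
          mul_le_mul_of_nonneg_left hmono2 hd0.le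
      _ = ∫ y in x..lam, d * (y ^ (d - 1) * (flam 0 * Real.exp (-(flam 0 * y ^ d)))) := by
          rw [intervalIntegral.integral_const_mul]
      _ = -Real.exp (-(flam 0 * lam ^ d)) - -Real.exp (-(flam 0 * x ^ d)) := hcalc
      _ ≤ Real.exp (-(flam 0 * x ^ d)) := by
          have := (Real.exp_pos (-(flam 0 * lam ^ d))).le
          linarith
  linarith
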